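/- For every Büchi sequence (x₁,x₂,x₃) of length 3 over ℤ there exist M ∈ H and a unique δ ∈ Δ₂ such that (x₁,x₂,x₃) = Mδ as column vectors. Moreover, if δ ∉ {(1,0,1),(−1,0,−1)} then M is unique with this property, and if δ ∈ {(1,0,1),(−1,0,−1)} then there are exactly two such matrices, namely M and MJ. -/

import Mathlib

open Matrix

def Bmat : Matrix (Fin 3) (Fin 3) ℤ := !![3, 4, 0; 2, 3, 0; 0, 0, 1]
def Jmat : Matrix (Fin 3) (Fin 3) ℤ := !![0, 0, 1; 0, 1, 0; 1, 0, 0]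

def BGL : GL (Fin 3) ℤ :=
  ⟨Bmat, !![3, -4, 0; -2, 3, 0; 0, 0, 1], by decide, by decide⟩

def JGL : GL (Fin 3) ℤ := ⟨Jmat, Jmat, by decide, by decide⟩

def H : Subgroup (GL (Fin 3) ℤ) := Subgroup.closure {BGL, JGL}

def Delta2 : Set (Fin 3 → ℤ) :=
  {![2, 1, 0], ![-2, 1, 0], ![1, 0, 1], ![-1, 0, 1], ![-1, 0, -1]}

namespace B3aux
set_option maxRecDepth 100000

/-! ### Tuple-level mod-8 reduction and orbit invariants -/

abbrev T8 := ZMod 8 × ZMod 8 × ZMod 8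

def bstep : T8 → T8 := fun w => (3*w.1+4*w.2.1, 2*w.1+3*w.2.1, w.2.2)
def bistep : T8 → T8 := fun w => (3*w.1-4*w.2.1, -2*w.1+3*w.2.1, w.2.2)
def jstep : T8 → T8 := fun w => (w.2.2, w.2.1, w.1)

def redT (v : Fin 3 → ℤ) : T8 := ((v 0 : ZMod 8), (v 1 : ZMod 8), (v 2 : ZMod 8))

lemma bistep_bstep (w : T8) : bistep (bstep w) = w := by
  obtain ⟨a, b, c⟩ := w
  simp only [bstep, bistep, Prod.mk.injEq]
  refine ⟨by ring, by ring, trivial⟩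

lemma bstep_bistep (w : T8) : bstep (bistep w) = w := by
  obtain ⟨a, b, c⟩ := w
  simp only [bstep, bistep, Prod.mk.injEq]
  refine ⟨by ring, by ring, trivial⟩

lemma jstep_jstep (w : T8) : jstep (jstep w) = w := rfl

lemma redT_B (v : Fin 3 → ℤ) : redT (Bmat.mulVec v) = bstep (redT v) := by
  have h0 : Bmat.mulVec v 0 = 3 * v 0 + 4 * v 1 := by
    simp [Bmat, Matrix.mulVec, dotProduct, Fin.sum_univ_three]
  have h1 : Bmat.mulVec v 1 = 2 * v 0 + 3 * v 1 := by
    simp [Bmat, Matrix.mulVec, dotProduct, Fin.sum_univ_three]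
  have h2 : Bmat.mulVec v 2 = v 2 := by
    simp [Bmat, Matrix.mulVec, dotProduct, Fin.sum_univ_three]
  simp only [redT, bstep, h0, h1, h2, Prod.mk.injEq]
  push_cast
  refine ⟨by ring, by ring, trivial⟩

lemma redT_J (v : Fin 3 → ℤ) : redT (Jmat.mulVec v) = jstep (redT v) := by
  have h0 : Jmat.mulVec v 0 = v 2 := by
    simp [Jmat, Matrix.mulVec, dotProduct, Fin.sum_univ_three]
  have h1 : Jmat.mulVec v 1 = v 1 := by
    simp [Jmat, Matrix.mulVec, dotProduct, Fin.sum_univ_three]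
  have h2 : Jmat.mulVec v 2 = v 0 := by
    simp [Jmat, Matrix.mulVec, dotProduct, Fin.sum_univ_three]
  simp only [redT, jstep, h0, h1, h2, Prod.mk.injEq]

/-- Orbit-membership mod 8 is an `H`-invariant. -/
theorem H_orbit_invariant {S : List T8}
    (hcl : ∀ w ∈ S, bstep w ∈ S ∧ bistep w ∈ S ∧ jstep w ∈ S)
    {N : GL (Fin 3) ℤ} (hN : N ∈ H) :
    ∀ v : Fin 3 → ℤ,
      (redT v ∈ S ↔ redT ((N : Matrix (Fin 3) (Fin 3) ℤ).mulVec v) ∈ S) := by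
  induction hN using Subgroup.closure_induction with
  | mem x hx =>
    intro v
    rcases hx with hx | hx
    · subst hx
      have hv : ((BGL : GL (Fin 3) ℤ) : Matrix (Fin 3) (Fin 3) ℤ) = Bmat := rfl
      rw [hv, redT_B]
      constructor
      · intro hw; exact (hcl _ hw).1
      · intro hw
        have := (hcl _ hw).2.1
        rwa [bistep_bstep] at this
    · rw [Set.mem_singleton_iff] at hx
      subst hx
      have hv : ((JGL : GL (Fin 3) ℤ) : Matrix (Fin 3) (Fin 3) ℤ) = Jmat := rfl
      rw [hv, redT_J]
      constructor
      · intro hw; exact (hcl _ hw).2.2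
      · intro hw
        have := (hcl _ hw).2.2
        rwa [jstep_jstep] at this
  | one => intro v; simp
  | mul x y hx hy px py =>
    intro v
    rw [Units.val_mul, ← Matrix.mulVec_mulVec]
    exact (py v).trans (px _)
  | inv x hx px =>
    intro v
    have h1 := px (((x⁻¹ : GL (Fin 3) ℤ) : Matrix (Fin 3) (Fin 3) ℤ).mulVec v)
    rw [Matrix.mulVec_mulVec] at h1
    rw [show ((x : Matrix (Fin 3) (Fin 3) ℤ) *
        ((x⁻¹ : GL (Fin 3) ℤ) : Matrix (Fin 3) (Fin 3) ℤ)) = 1 from x.mul_inv] at h1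
    rw [Matrix.one_mulVec] at h1
    exact h1.symm

/-! ### The orbit lists mod 8 -/

def S1 : List T8 := [(0,1,2),(0,7,2),(2,1,0),(2,3,4),(2,5,4),(2,7,0),(4,3,2),(4,5,2)]
def S2 : List T8 := [(0,1,6),(0,7,6),(4,3,6),(4,5,6),(6,1,0),(6,3,4),(6,5,4),(6,7,0)]
def S3 : List T8 := [(1,0,1),(1,2,3),(1,4,1),(1,6,3),(3,0,3),(3,2,1),(3,4,3),(3,6,1)]
def S4 : List T8 := [(1,0,7),(1,2,5),(1,4,7),(1,6,5),(3,0,5),(3,2,7),(3,4,5),(3,6,7),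
  (5,0,3),(5,2,1),(5,4,3),(5,6,1),(7,0,1),(7,2,3),(7,4,1),(7,6,3)]
def S5 : List T8 := [(5,0,5),(5,2,7),(5,4,5),(5,6,7),(7,0,7),(7,2,5),(7,4,7),(7,6,5)]
def S0 : List T8 := [(0,0,1),(0,2,3),(0,4,1),(0,6,3),(1,0,0),(1,4,0),(3,2,0),(3,6,0)]

lemma S1_closed : ∀ w ∈ S1, bstep w ∈ S1 ∧ bistep w ∈ S1 ∧ jstep w ∈ S1 := by decide
lemma S2_closed : ∀ w ∈ S2, bstep w ∈ S2 ∧ bistep w ∈ S2 ∧ jstep w ∈ S2 := by decide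
lemma S3_closed : ∀ w ∈ S3, bstep w ∈ S3 ∧ bistep w ∈ S3 ∧ jstep w ∈ S3 := by decide
lemma S4_closed : ∀ w ∈ S4, bstep w ∈ S4 ∧ bistep w ∈ S4 ∧ jstep w ∈ S4 := by decide
lemma S5_closed : ∀ w ∈ S5, bstep w ∈ S5 ∧ bistep w ∈ S5 ∧ jstep w ∈ S5 := by decide
lemma S0_closed : ∀ w ∈ S0, bstep w ∈ S0 ∧ bistep w ∈ S0 ∧ jstep w ∈ S0 := by decide

/-! ### The mod-2 / determinant invariant -/

def Gq : Matrix (Fin 3) (Fin 3) ℤ := !![1,0,0;0,-2,0;0,0,1]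
def Binv : Matrix (Fin 3) (Fin 3) ℤ := !![3, -4, 0; -2, 3, 0; 0, 0, 1]
def J2 : Matrix (Fin 3) (Fin 3) (ZMod 2) := !![0,0,1;0,1,0;1,0,0]

def m2 (N : Matrix (Fin 3) (Fin 3) ℤ) : Matrix (Fin 3) (Fin 3) (ZMod 2) :=
  N.map (Int.castRingHom (ZMod 2))

lemma m2_mul (A B : Matrix (Fin 3) (Fin 3) ℤ) : m2 (A * B) = m2 A * m2 B := by
  exact Matrix.map_mul (f := Int.castRingHom (ZMod 2))

/-- The mod 2 reduction together with the determinant, as an invariant of `H`. -/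
theorem H_pdet {N : GL (Fin 3) ℤ} (hN : N ∈ H) :
    (m2 (N : Matrix (Fin 3) (Fin 3) ℤ) = 1 ∧ (N : Matrix (Fin 3) (Fin 3) ℤ).det = 1) ∨
    (m2 (N : Matrix (Fin 3) (Fin 3) ℤ) = J2 ∧ (N : Matrix (Fin 3) (Fin 3) ℤ).det = -1) := by
  induction hN using Subgroup.closure_induction with
  | mem x hx =>
    rcases hx with hx | hx
    · subst hx
      left
      constructor
      · decide
      · rw [show ((BGL : GL (Fin 3) ℤ) : Matrix (Fin 3) (Fin 3) ℤ) = Bmat from rfl]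
        decide
    · rw [Set.mem_singleton_iff] at hx
      subst hx
      right
      constructor
      · decide
      · rw [show ((JGL : GL (Fin 3) ℤ) : Matrix (Fin 3) (Fin 3) ℤ) = Jmat from rfl]
        decide
  | one => left; constructor <;> simp [m2]
  | mul x y hx hy px py =>
    rw [Units.val_mul, m2_mul, Matrix.det_mul]
    rcases px with ⟨p1, p2⟩ | ⟨p1, p2⟩ <;> rcases py with ⟨q1, q2⟩ | ⟨q1, q2⟩ <;>
      rw [p1, p2, q1, q2]
    · left; constructor <;> simp
    · right; constructor <;> simp
    · right; constructor <;> simp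
    · left
      constructor
      · decide
      · norm_num
  | inv x hx px =>
    have hmul : (x : Matrix (Fin 3) (Fin 3) ℤ) * ((x⁻¹ : GL (Fin 3) ℤ) : Matrix (Fin 3) (Fin 3) ℤ) = 1 :=
      x.mul_inv
    have h2 : m2 (x : Matrix (Fin 3) (Fin 3) ℤ) * m2 ((x⁻¹ : GL (Fin 3) ℤ) : Matrix (Fin 3) (Fin 3) ℤ) = 1 := by
      rw [← m2_mul, hmul]; simp [m2]
    have hd : ((x : Matrix (Fin 3) (Fin 3) ℤ)).det * ((x⁻¹ : GL (Fin 3) ℤ) : Matrix (Fin 3) (Fin 3) ℤ).det = 1 := by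
      rw [← Matrix.det_mul, hmul, Matrix.det_one]
    rcases px with ⟨p1, p2⟩ | ⟨p1, p2⟩
    · left
      rw [p1, one_mul] at h2
      rw [p2, one_mul] at hd
      exact ⟨h2, hd⟩
    · right
      rw [p1] at h2
      rw [p2] at hd
      constructor
      · have := congrArg (fun m => J2 * m) h2
        simpa [← mul_assoc, show J2 * J2 = 1 from by decide] using this
      · linarith

/-! ### The quadratic form invariant -/

theorem H_form {N : GL (Fin 3) ℤ} (hN : N ∈ H) :
    (N : Matrix (Fin 3) (Fin 3) ℤ)ᵀ * Gq * (N : Matrix (Fin 3) (Fin 3) ℤ) = Gq := by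
  induction hN using Subgroup.closure_induction with
  | mem x hx =>
    rcases hx with hx | hx
    · subst hx
      rw [show ((BGL : GL (Fin 3) ℤ) : Matrix (Fin 3) (Fin 3) ℤ) = Bmat from rfl]
      decide
    · rw [Set.mem_singleton_iff] at hx
      subst hx
      rw [show ((JGL : GL (Fin 3) ℤ) : Matrix (Fin 3) (Fin 3) ℤ) = Jmat from rfl]
      decide
  | one => simp
  | mul x y hx hy px py =>
    rw [Units.val_mul, Matrix.transpose_mul]
    calc (y : Matrix (Fin 3) (Fin 3) ℤ)ᵀ * (x : Matrix (Fin 3) (Fin 3) ℤ)ᵀ * Gq *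
          ((x : Matrix (Fin 3) (Fin 3) ℤ) * (y : Matrix (Fin 3) (Fin 3) ℤ))
        = (y : Matrix (Fin 3) (Fin 3) ℤ)ᵀ * ((x : Matrix (Fin 3) (Fin 3) ℤ)ᵀ * Gq *
            (x : Matrix (Fin 3) (Fin 3) ℤ)) * (y : Matrix (Fin 3) (Fin 3) ℤ) := by
          noncomm_ring
      _ = Gq := by rw [px, py]
  | inv x hx px =>
    have hmul : (x : Matrix (Fin 3) (Fin 3) ℤ) * ((x⁻¹ : GL (Fin 3) ℤ) : Matrix (Fin 3) (Fin 3) ℤ) = 1 :=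
      x.mul_inv
    calc ((x⁻¹ : GL (Fin 3) ℤ) : Matrix (Fin 3) (Fin 3) ℤ)ᵀ * Gq * ((x⁻¹ : GL (Fin 3) ℤ) : Matrix (Fin 3) (Fin 3) ℤ)
        = ((x⁻¹ : GL (Fin 3) ℤ) : Matrix (Fin 3) (Fin 3) ℤ)ᵀ *
            ((x : Matrix (Fin 3) (Fin 3) ℤ)ᵀ * Gq * (x : Matrix (Fin 3) (Fin 3) ℤ)) *
            ((x⁻¹ : GL (Fin 3) ℤ) : Matrix (Fin 3) (Fin 3) ℤ) := by rw [px]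
      _ = ((x : Matrix (Fin 3) (Fin 3) ℤ) * ((x⁻¹ : GL (Fin 3) ℤ) : Matrix (Fin 3) (Fin 3) ℤ))ᵀ * Gq *
            ((x : Matrix (Fin 3) (Fin 3) ℤ) * ((x⁻¹ : GL (Fin 3) ℤ) : Matrix (Fin 3) (Fin 3) ℤ)) := by
          rw [Matrix.transpose_mul]; noncomm_ring
      _ = Gq := by rw [hmul]; simp

/-! ### Stabilizer classification: pure algebra -/

lemma alg_d1 (a b c d e f g h i : ℤ)
    (e1 : a^2 - 2*d^2 + g^2 = 1)
    (e12 : a*b - 2*(d*e) + g*h = 0)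
    (e13 : a*c - 2*(d*f) + g*i = 0)
    (e23 : b*c - 2*(e*f) + h*i = 0)
    (e3 : c^2 - 2*f^2 + i^2 = 1)
    (v1 : 2*a + b = 2) (v2 : 2*d + e = 1) (v3 : 2*g + h = 0) :
    (a=1∧b=0∧c=0∧d=0∧e=1∧f=0∧g=0∧h=0∧i=1) ∨
    (a=1∧b=0∧c=0∧d=0∧e=1∧f=0∧g=0∧h=0∧i=-1) ∨
    (a=3∧b=-4∧c=0∧d=2∧e=-3∧f=0∧g=0∧h=0∧i=1) ∨
    (a=3∧b=-4∧c=0∧d=2∧e=-3∧f=0∧g=0∧h=0∧i=-1) := by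
  have hb : b = 2 - 2*a := by linarith
  have he : e = 1 - 2*d := by linarith
  have hh : h = -2*g := by linarith
  subst hb he hh
  have h2a : 2*a = 2*d + 2 := by linear_combination e12 + 2*e1
  have ha : a = d + 1 := by omega
  subst ha
  have hfac : (d-1-g)*(d-1+g) = 1 := by linear_combination -e1
  have hdg : g = 0 ∧ (d = 0 ∨ d = 2) := by
    rcases Int.eq_one_or_neg_one_of_mul_eq_one' hfac with ⟨h1,h2⟩ | ⟨h1,h2⟩ <;> omega
  obtain ⟨hg, hd⟩ := hdg
  subst hg
  rcases hd with hd | hd <;> subst hd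
  · have hc : c = 0 := by linarith [e13]
    have hf : f = 0 := by linarith [e23]
    subst hc hf
    have hi : (i-1)*(i+1) = 0 := by linear_combination e3
    rcases mul_eq_zero.mp hi with hi | hi
    · left; refine ⟨by ring, by ring, rfl, rfl, by ring, rfl, rfl, by ring, by linarith⟩
    · right; left; exact ⟨by ring, by ring, rfl, rfl, by ring, rfl, rfl, by ring, by linarith⟩
  · have hc : c = 0 := by linarith [e13, e23]
    have hf : f = 0 := by linarith [e13, e23]
    subst hc hf
    have hi : (i-1)*(i+1) = 0 := by linear_combination e3
    rcases mul_eq_zero.mp hi with hi | hi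
    · right; right; left; exact ⟨by ring, by ring, rfl, rfl, by ring, rfl, rfl, by ring, by linarith⟩
    · right; right; right; exact ⟨by ring, by ring, rfl, rfl, by ring, rfl, rfl, by ring, by linarith⟩

lemma alg_d2 (a b c d e f g h i : ℤ)
    (e1 : a^2 - 2*d^2 + g^2 = 1)
    (e12 : a*b - 2*(d*e) + g*h = 0)
    (e13 : a*c - 2*(d*f) + g*i = 0)
    (e23 : b*c - 2*(e*f) + h*i = 0)
    (e3 : c^2 - 2*f^2 + i^2 = 1)
    (v1 : -(2*a) + b = -2) (v2 : -(2*d) + e = 1) (v3 : -(2*g) + h = 0) :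
    (a=1∧b=0∧c=0∧d=0∧e=1∧f=0∧g=0∧h=0∧i=1) ∨
    (a=1∧b=0∧c=0∧d=0∧e=1∧f=0∧g=0∧h=0∧i=-1) ∨
    (a=3∧b=4∧c=0∧d=-2∧e=-3∧f=0∧g=0∧h=0∧i=1) ∨
    (a=3∧b=4∧c=0∧d=-2∧e=-3∧f=0∧g=0∧h=0∧i=-1) := by
  have hb : b = 2*a - 2 := by linarith
  have he : e = 1 + 2*d := by linarith
  have hh : h = 2*g := by linarith
  subst hb he hh
  have h2a : 2*a + 2*d = 2 := by linear_combination 2*e1 - e12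
  have ha : a = 1 - d := by omega
  subst ha
  have hfac : (d+1-g)*(d+1+g) = 1 := by linear_combination -e1
  have hdg : g = 0 ∧ (d = 0 ∨ d = -2) := by
    rcases Int.eq_one_or_neg_one_of_mul_eq_one' hfac with ⟨h1,h2⟩ | ⟨h1,h2⟩ <;> omega
  obtain ⟨hg, hd⟩ := hdg
  subst hg
  rcases hd with hd | hd <;> subst hd
  · have hc : c = 0 := by linarith [e13]
    have hf : f = 0 := by linarith [e23]
    subst hc hf
    have hi : (i-1)*(i+1) = 0 := by linear_combination e3
    rcases mul_eq_zero.mp hi with hi | hi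
    · left; refine ⟨by ring, by ring, rfl, rfl, by ring, rfl, rfl, by ring, by linarith⟩
    · right; left; exact ⟨by ring, by ring, rfl, rfl, by ring, rfl, rfl, by ring, by linarith⟩
  · have hc : c = 0 := by linarith [e13, e23]
    have hf : f = 0 := by linarith [e13, e23]
    subst hc hf
    have hi : (i-1)*(i+1) = 0 := by linear_combination e3
    rcases mul_eq_zero.mp hi with hi | hi
    · right; right; left; exact ⟨by ring, by ring, rfl, rfl, by ring, rfl, rfl, by ring, by linarith⟩
    · right; right; right; exact ⟨by ring, by ring, rfl, rfl, by ring, rfl, rfl, by ring, by linarith⟩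

lemma alg_p (a b c d e f g h i : ℤ)
    (e1 : a^2 - 2*d^2 + g^2 = 1)
    (e12 : a*b - 2*(d*e) + g*h = 0)
    (e13 : a*c - 2*(d*f) + g*i = 0)
    (e2 : b^2 - 2*e^2 + h^2 = -2)
    (e23 : b*c - 2*(e*f) + h*i = 0)
    (v1 : a + c = 1) (v2 : d + f = 0) (v3 : g + i = 1) :
    (a=1∧b=0∧c=0∧d=0∧e=1∧f=0∧g=0∧h=0∧i=1) ∨
    (a=1∧b=0∧c=0∧d=0∧e=-1∧f=0∧g=0∧h=0∧i=1) ∨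
    (a=0∧b=0∧c=1∧d=0∧e=1∧f=0∧g=1∧h=0∧i=0) ∨
    (a=0∧b=0∧c=1∧d=0∧e=-1∧f=0∧g=1∧h=0∧i=0) := by
  have hc : c = 1 - a := by linarith
  have hf : f = -d := by linarith
  have hi : i = 1 - g := by linarith
  subst hc hf hi
  have hg : g = 1 - a := by linear_combination e13 + e1
  subst hg
  have hfac : (2*a-1-2*d)*(2*a-1+2*d) = 1 := by linear_combination 2*e1
  have had : d = 0 ∧ (a = 1 ∨ a = 0) := by
    rcases Int.eq_one_or_neg_one_of_mul_eq_one' hfac with ⟨h1,h2⟩ | ⟨h1,h2⟩ <;> omega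
  obtain ⟨hd, ha⟩ := had
  subst hd
  rcases ha with ha | ha <;> subst ha
  · have hb : b = 0 := by linarith [e12]
    have hh : h = 0 := by linarith [e23]
    subst hb hh
    have he2 : e^2 = 1 := by linarith
    have he : (e-1)*(e+1) = 0 := by linear_combination he2
    rcases mul_eq_zero.mp he with he | he
    · left; exact ⟨rfl, rfl, by ring, rfl, by linarith, by ring, by ring, rfl, by ring⟩
    · right; left; exact ⟨rfl, rfl, by ring, rfl, by linarith, by ring, by ring, rfl, by ring⟩
  · have hh : h = 0 := by linarith [e12]
    have hb : b = 0 := by linarith [e23]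
    subst hb hh
    have he2 : e^2 = 1 := by linarith
    have he : (e-1)*(e+1) = 0 := by linear_combination he2
    rcases mul_eq_zero.mp he with he | he
    · right; right; left
      exact ⟨rfl, rfl, by ring, rfl, by linarith, by ring, by ring, rfl, by ring⟩
    · right; right; right
      exact ⟨rfl, rfl, by ring, rfl, by linarith, by ring, by ring, rfl, by ring⟩

lemma alg_m (a b c d e f g h i : ℤ)
    (e1 : a^2 - 2*d^2 + g^2 = 1)
    (e12 : a*b - 2*(d*e) + g*h = 0)
    (e13 : a*c - 2*(d*f) + g*i = 0)
    (e2 : b^2 - 2*e^2 + h^2 = -2)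
    (e23 : b*c - 2*(e*f) + h*i = 0)
    (v1 : -a + c = -1) (v2 : -d + f = 0) (v3 : -g + i = 1) :
    (a=1∧b=0∧c=0∧d=0∧e=1∧f=0∧g=0∧h=0∧i=1) ∨
    (a=1∧b=0∧c=0∧d=0∧e=-1∧f=0∧g=0∧h=0∧i=1) ∨
    (a=0∧b=0∧c=-1∧d=0∧e=1∧f=0∧g=-1∧h=0∧i=0) ∨
    (a=0∧b=0∧c=-1∧d=0∧e=-1∧f=0∧g=-1∧h=0∧i=0) := by
  have hc : c = a - 1 := by linarith
  have hf : d = f := by linarith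
  have hi : i = g + 1 := by linarith
  subst hc hf hi
  have hg : g = a - 1 := by linear_combination e13 - e1
  subst hg
  have hfac : (2*a-1-2*d)*(2*a-1+2*d) = 1 := by linear_combination 2*e1
  have had : d = 0 ∧ (a = 1 ∨ a = 0) := by
    rcases Int.eq_one_or_neg_one_of_mul_eq_one' hfac with ⟨h1,h2⟩ | ⟨h1,h2⟩ <;> omega
  obtain ⟨hd, ha⟩ := had
  subst hd
  rcases ha with ha | ha <;> subst ha
  · have hb : b = 0 := by linarith [e12]
    have hh : h = 0 := by linarith [e23]
    subst hb hh
    have he2 : e^2 = 1 := by linarith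
    have he : (e-1)*(e+1) = 0 := by linear_combination he2
    rcases mul_eq_zero.mp he with he | he
    · left; exact ⟨rfl, rfl, by ring, rfl, by linarith, by ring, by ring, rfl, by ring⟩
    · right; left; exact ⟨rfl, rfl, by ring, rfl, by linarith, by ring, by ring, rfl, by ring⟩
  · have hh : h = 0 := by linarith [e12]
    have hb : b = 0 := by linarith [e23]
    subst hb hh
    have he2 : e^2 = 1 := by linarith
    have he : (e-1)*(e+1) = 0 := by linear_combination he2
    rcases mul_eq_zero.mp he with he | he
    · right; right; left
      exact ⟨rfl, rfl, by ring, rfl, by linarith, by ring, by ring, rfl, by ring⟩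
    · right; right; right
      exact ⟨rfl, rfl, by ring, rfl, by linarith, by ring, by ring, rfl, by ring⟩

/-! ### Extraction of scalar equations -/

lemma form_entries {A : Matrix (Fin 3) (Fin 3) ℤ} (hG : Aᵀ * Gq * A = Gq) :
    (A 0 0^2 - 2*(A 1 0)^2 + (A 2 0)^2 = 1) ∧
    (A 0 0*(A 0 1) - 2*((A 1 0)*(A 1 1)) + (A 2 0)*(A 2 1) = 0) ∧
    (A 0 0*(A 0 2) - 2*((A 1 0)*(A 1 2)) + (A 2 0)*(A 2 2) = 0) ∧
    (A 0 1^2 - 2*(A 1 1)^2 + (A 2 1)^2 = -2) ∧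
    (A 0 1*(A 0 2) - 2*((A 1 1)*(A 1 2)) + (A 2 1)*(A 2 2) = 0) ∧
    (A 0 2^2 - 2*(A 1 2)^2 + (A 2 2)^2 = 1) := by
  have h00 := congrFun (congrFun hG 0) 0
  have h01 := congrFun (congrFun hG 0) 1
  have h02 := congrFun (congrFun hG 0) 2
  have h11 := congrFun (congrFun hG 1) 1
  have h12 := congrFun (congrFun hG 1) 2
  have h22 := congrFun (congrFun hG 2) 2
  simp [Gq, Matrix.mul_apply, Fin.sum_univ_three] at h00 h01 h02 h11 h12 h22
  refine ⟨by linear_combination h00, by linear_combination h01, by linear_combination h02,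
    by linear_combination h11, by linear_combination h12, by linear_combination h22⟩

lemma mulVec_entries (A : Matrix (Fin 3) (Fin 3) ℤ) (v : Fin 3 → ℤ) (j : Fin 3) :
    A.mulVec v j = A j 0 * v 0 + A j 1 * v 1 + A j 2 * v 2 := by
  simp [Matrix.mulVec, dotProduct, Fin.sum_univ_three]

/-! ### Candidate eliminations -/

lemma redT_e3 : redT ![0,0,1] = ((0 : ZMod 8), (0 : ZMod 8), (1 : ZMod 8)) := by decide

lemma not_H_e3_to (u : Fin 3 → ℤ) (hu : redT u ∉ S0)
    {N : GL (Fin 3) ℤ} (hN : N ∈ H)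
    (h : (N : Matrix (Fin 3) (Fin 3) ℤ).mulVec ![0,0,1] = u) : False := by
  have hinv := (H_orbit_invariant S0_closed hN ![0,0,1]).mp
  rw [h] at hinv
  exact hu (hinv (by rw [redT_e3]; decide))

/-- Eliminate candidates with `m2 = 1`, `det = -1`. -/
lemma elim_det {N : GL (Fin 3) ℤ} (hN : N ∈ H) {M : Matrix (Fin 3) (Fin 3) ℤ}
    (hM : (N : Matrix (Fin 3) (Fin 3) ℤ) = M)
    (h1 : m2 M = 1) (h2 : M.det = -1) : False := by
  rcases H_pdet hN with ⟨p1, p2⟩ | ⟨p1, p2⟩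
  · rw [hM, h2] at p2; omega
  · rw [hM, h1] at p1
    have : (1 : Matrix (Fin 3) (Fin 3) (ZMod 2)) ≠ J2 := by decide
    exact this p1

/-- Eliminate candidates with `m2 = J2`, `det = 1`. -/
lemma elim_detJ {N : GL (Fin 3) ℤ} (hN : N ∈ H) {M : Matrix (Fin 3) (Fin 3) ℤ}
    (hM : (N : Matrix (Fin 3) (Fin 3) ℤ) = M)
    (h1 : m2 M = J2) (h2 : M.det = 1) : False := by
  rcases H_pdet hN with ⟨p1, p2⟩ | ⟨p1, p2⟩
  · rw [hM, h1] at p1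
    have : J2 ≠ (1 : Matrix (Fin 3) (Fin 3) (ZMod 2)) := by decide
    exact this p1
  · rw [hM, h2] at p2; omega

/-! ### The stabilizer lemmas -/

lemma stab_d1 {N : GL (Fin 3) ℤ} (hN : N ∈ H)
    (hv : (N : Matrix (Fin 3) (Fin 3) ℤ).mulVec ![2,1,0] = ![2,1,0]) : N = 1 := by
  obtain ⟨e1, e12, e13, e2, e23, e3⟩ := form_entries (H_form hN)
  have w0 := congrFun hv 0
  have w1 := congrFun hv 1
  have w2 := congrFun hv 2
  rw [mulVec_entries] at w0 w1 w2
  simp at w0 w1 w2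
  set A := (N : Matrix (Fin 3) (Fin 3) ℤ) with hA
  have v1 : 2*(A 0 0) + A 0 1 = 2 := by linear_combination w0
  have v2 : 2*(A 1 0) + A 1 1 = 1 := by linear_combination w1
  have v3 : 2*(A 2 0) + A 2 1 = 0 := by linear_combination w2
  have eta := Matrix.eta_fin_three A
  rcases alg_d1 (A 0 0) (A 0 1) (A 0 2) (A 1 0) (A 1 1) (A 1 2) (A 2 0) (A 2 1) (A 2 2)
      e1 e12 e13 e23 e3 v1 v2 v3 with
    ⟨h1,h2,h3,h4,h5,h6,h7,h8,h9⟩ | ⟨h1,h2,h3,h4,h5,h6,h7,h8,h9⟩ |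
    ⟨h1,h2,h3,h4,h5,h6,h7,h8,h9⟩ | ⟨h1,h2,h3,h4,h5,h6,h7,h8,h9⟩ <;>
    rw [h1,h2,h3,h4,h5,h6,h7,h8,h9] at eta
  · exact Units.ext (by rw [← hA, eta]; decide)
  · exact absurd (elim_det hN eta (by decide) (by decide)) id
  · exact absurd (elim_det hN eta (by decide) (by decide)) id
  · exact absurd (not_H_e3_to ![0,0,-1] (by decide) hN
      (by rw [← hA, eta]; decide)) id

lemma stab_d2 {N : GL (Fin 3) ℤ} (hN : N ∈ H)
    (hv : (N : Matrix (Fin 3) (Fin 3) ℤ).mulVec ![-2,1,0] = ![-2,1,0]) : N = 1 := by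
  obtain ⟨e1, e12, e13, e2, e23, e3⟩ := form_entries (H_form hN)
  have w0 := congrFun hv 0
  have w1 := congrFun hv 1
  have w2 := congrFun hv 2
  rw [mulVec_entries] at w0 w1 w2
  simp at w0 w1 w2
  set A := (N : Matrix (Fin 3) (Fin 3) ℤ) with hA
  have v1 : -(2*(A 0 0)) + A 0 1 = -2 := by linear_combination w0
  have v2 : -(2*(A 1 0)) + A 1 1 = 1 := by linear_combination w1
  have v3 : -(2*(A 2 0)) + A 2 1 = 0 := by linear_combination w2
  have eta := Matrix.eta_fin_three A
  rcases alg_d2 (A 0 0) (A 0 1) (A 0 2) (A 1 0) (A 1 1) (A 1 2) (A 2 0) (A 2 1) (A 2 2)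
      e1 e12 e13 e23 e3 v1 v2 v3 with
    ⟨h1,h2,h3,h4,h5,h6,h7,h8,h9⟩ | ⟨h1,h2,h3,h4,h5,h6,h7,h8,h9⟩ |
    ⟨h1,h2,h3,h4,h5,h6,h7,h8,h9⟩ | ⟨h1,h2,h3,h4,h5,h6,h7,h8,h9⟩ <;>
    rw [h1,h2,h3,h4,h5,h6,h7,h8,h9] at eta
  · exact Units.ext (by rw [← hA, eta]; decide)
  · exact absurd (elim_det hN eta (by decide) (by decide)) id
  · exact absurd (elim_det hN eta (by decide) (by decide)) id
  · exact absurd (not_H_e3_to ![0,0,-1] (by decide) hN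
      (by rw [← hA, eta]; decide)) id

lemma stab_m {N : GL (Fin 3) ℤ} (hN : N ∈ H)
    (hv : (N : Matrix (Fin 3) (Fin 3) ℤ).mulVec ![-1,0,1] = ![-1,0,1]) : N = 1 := by
  obtain ⟨e1, e12, e13, e2, e23, e3⟩ := form_entries (H_form hN)
  have w0 := congrFun hv 0
  have w1 := congrFun hv 1
  have w2 := congrFun hv 2
  rw [mulVec_entries] at w0 w1 w2
  simp at w0 w1 w2
  set A := (N : Matrix (Fin 3) (Fin 3) ℤ) with hA
  have v1 : -(A 0 0) + A 0 2 = -1 := by linear_combination w0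
  have v2 : -(A 1 0) + A 1 2 = 0 := by linear_combination w1
  have v3 : -(A 2 0) + A 2 2 = 1 := by linear_combination w2
  have eta := Matrix.eta_fin_three A
  rcases alg_m (A 0 0) (A 0 1) (A 0 2) (A 1 0) (A 1 1) (A 1 2) (A 2 0) (A 2 1) (A 2 2)
      e1 e12 e13 e2 e23 v1 v2 v3 with
    ⟨h1,h2,h3,h4,h5,h6,h7,h8,h9⟩ | ⟨h1,h2,h3,h4,h5,h6,h7,h8,h9⟩ |
    ⟨h1,h2,h3,h4,h5,h6,h7,h8,h9⟩ | ⟨h1,h2,h3,h4,h5,h6,h7,h8,h9⟩ <;>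
    rw [h1,h2,h3,h4,h5,h6,h7,h8,h9] at eta
  · exact Units.ext (by rw [← hA, eta]; decide)
  · exact absurd (elim_det hN eta (by decide) (by decide)) id
  · exact absurd (not_H_e3_to ![-1,0,0] (by decide) hN
      (by rw [← hA, eta]; decide)) id
  · exact absurd (elim_detJ hN eta (by decide) (by decide)) id

lemma stab_p_core {N : GL (Fin 3) ℤ} (hN : N ∈ H)
    (v1 : (N : Matrix (Fin 3) (Fin 3) ℤ) 0 0 + (N : Matrix (Fin 3) (Fin 3) ℤ) 0 2 = 1)
    (v2 : (N : Matrix (Fin 3) (Fin 3) ℤ) 1 0 + (N : Matrix (Fin 3) (Fin 3) ℤ) 1 2 = 0)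
    (v3 : (N : Matrix (Fin 3) (Fin 3) ℤ) 2 0 + (N : Matrix (Fin 3) (Fin 3) ℤ) 2 2 = 1) :
    N = 1 ∨ N = JGL := by
  obtain ⟨e1, e12, e13, e2, e23, e3⟩ := form_entries (H_form hN)
  set A := (N : Matrix (Fin 3) (Fin 3) ℤ) with hA
  have eta := Matrix.eta_fin_three A
  rcases alg_p (A 0 0) (A 0 1) (A 0 2) (A 1 0) (A 1 1) (A 1 2) (A 2 0) (A 2 1) (A 2 2)
      e1 e12 e13 e2 e23 v1 v2 v3 with
    ⟨h1,h2,h3,h4,h5,h6,h7,h8,h9⟩ | ⟨h1,h2,h3,h4,h5,h6,h7,h8,h9⟩ |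
    ⟨h1,h2,h3,h4,h5,h6,h7,h8,h9⟩ | ⟨h1,h2,h3,h4,h5,h6,h7,h8,h9⟩ <;>
    rw [h1,h2,h3,h4,h5,h6,h7,h8,h9] at eta
  · exact Or.inl (Units.ext (by rw [← hA, eta]; decide))
  · exact absurd (elim_det hN eta (by decide) (by decide)) id
  · exact Or.inr (Units.ext (by rw [← hA, eta]; decide))
  · exact absurd (elim_detJ hN eta (by decide) (by decide)) id

lemma stab_p1 {N : GL (Fin 3) ℤ} (hN : N ∈ H)
    (hv : (N : Matrix (Fin 3) (Fin 3) ℤ).mulVec ![1,0,1] = ![1,0,1]) : N = 1 ∨ N = JGL := by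
  have w0 := congrFun hv 0
  have w1 := congrFun hv 1
  have w2 := congrFun hv 2
  rw [mulVec_entries] at w0 w1 w2
  simp at w0 w1 w2
  exact stab_p_core hN (by linear_combination w0) (by linear_combination w1)
    (by linear_combination w2)

lemma stab_p2 {N : GL (Fin 3) ℤ} (hN : N ∈ H)
    (hv : (N : Matrix (Fin 3) (Fin 3) ℤ).mulVec ![-1,0,-1] = ![-1,0,-1]) : N = 1 ∨ N = JGL := by
  have w0 := congrFun hv 0
  have w1 := congrFun hv 1
  have w2 := congrFun hv 2
  rw [mulVec_entries] at w0 w1 w2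
  simp at w0 w1 w2
  exact stab_p_core hN (by linear_combination -w0) (by linear_combination -w1)
    (by linear_combination -w2)

/-! ### Existence via descent -/

def Good (x : Fin 3 → ℤ) : Prop :=
  ∃ M ∈ H, ∃ δ ∈ Delta2, x = (M : Matrix (Fin 3) (Fin 3) ℤ).mulVec δ

lemma BGL_mem : BGL ∈ H := Subgroup.subset_closure (Or.inl rfl)
lemma JGL_mem : JGL ∈ H := Subgroup.subset_closure (Or.inr rfl)

lemma good_mulVec {y : Fin 3 → ℤ} (hy : Good y) {N : GL (Fin 3) ℤ} (hN : N ∈ H) :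
    Good ((N : Matrix (Fin 3) (Fin 3) ℤ).mulVec y) := by
  obtain ⟨M, hM, δ, hδ, hy⟩ := hy
  exact ⟨N * M, mul_mem hN hM, δ, hδ, by rw [hy, Matrix.mulVec_mulVec, Units.val_mul]⟩

lemma vec3_eta (x : Fin 3 → ℤ) : x = ![x 0, x 1, x 2] := by
  funext i; fin_cases i <;> rfl

lemma mem_Delta2_1 : ![2,1,0] ∈ Delta2 := Set.mem_insert _ _
lemma mem_Delta2_2 : ![-2,1,0] ∈ Delta2 := Set.mem_insert_of_mem _ (Set.mem_insert _ _)
lemma mem_Delta2_3 : ![1,0,1] ∈ Delta2 :=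
  Set.mem_insert_of_mem _ (Set.mem_insert_of_mem _ (Set.mem_insert _ _))
lemma mem_Delta2_4 : ![-1,0,1] ∈ Delta2 :=
  Set.mem_insert_of_mem _ (Set.mem_insert_of_mem _ (Set.mem_insert_of_mem _ (Set.mem_insert _ _)))
lemma mem_Delta2_5 : ![-1,0,-1] ∈ Delta2 :=
  Set.mem_insert_of_mem _ (Set.mem_insert_of_mem _ (Set.mem_insert_of_mem _
    (Set.mem_insert_of_mem _ rfl)))

lemma good_of_Delta2 {δ : Fin 3 → ℤ} (hδ : δ ∈ Delta2) : Good δ :=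
  ⟨1, one_mem _, δ, hδ, by simp⟩

lemma good_base (x : Fin 3 → ℤ)
    (h : x = ![1,0,1] ∨ x = ![-1,0,1] ∨ x = ![-1,0,-1] ∨ x = ![1,0,-1] ∨
         x = ![2,1,0] ∨ x = ![2,-1,0] ∨ x = ![-2,1,0] ∨ x = ![-2,-1,0] ∨
         x = ![0,1,2] ∨ x = ![0,1,-2] ∨ x = ![0,-1,2] ∨ x = ![0,-1,-2]) : Good x := by
  rcases h with h|h|h|h|h|h|h|h|h|h|h|h <;> subst h
  · exact good_of_Delta2 mem_Delta2_3
  · exact good_of_Delta2 mem_Delta2_4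
  · exact good_of_Delta2 mem_Delta2_5
  · exact ⟨JGL, JGL_mem, ![-1,0,1], mem_Delta2_4, by decide⟩
  · exact good_of_Delta2 mem_Delta2_1
  · exact ⟨BGL⁻¹, inv_mem BGL_mem, ![2,1,0], mem_Delta2_1, by decide⟩
  · exact good_of_Delta2 mem_Delta2_2
  · exact ⟨BGL, BGL_mem, ![-2,1,0], mem_Delta2_2, by decide⟩
  · exact ⟨JGL, JGL_mem, ![2,1,0], mem_Delta2_1, by decide⟩
  · exact ⟨JGL, JGL_mem, ![-2,1,0], mem_Delta2_2, by decide⟩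
  · exact ⟨JGL * BGL⁻¹, mul_mem JGL_mem (inv_mem BGL_mem), ![2,1,0], mem_Delta2_1, by decide⟩
  · exact ⟨JGL * BGL, mul_mem JGL_mem BGL_mem, ![-2,1,0], mem_Delta2_2, by decide⟩

lemma natAbs_lt_of_sq {a b : ℤ} (h : a^2 < b^2) : a.natAbs < b.natAbs := by
  by_contra h'
  push_neg at h'
  have habs : |b| ≤ |a| := by
    rw [Int.abs_eq_natAbs, Int.abs_eq_natAbs]
    exact_mod_cast h'
  have h2 := pow_le_pow_left₀ (abs_nonneg b) habs 2
  rw [sq_abs, sq_abs] at h2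
  omega

lemma B_vec (a b c : ℤ) : Bmat.mulVec ![3*a-4*b, -(2*a)+3*b, c] = ![a,b,c] := by
  funext j
  rw [mulVec_entries]
  fin_cases j <;> norm_num [Bmat, Matrix.cons_val_two] <;> ring

lemma Binv_vec (a b c : ℤ) : Binv.mulVec ![3*a+4*b, 2*a+3*b, c] = ![a,b,c] := by
  funext j
  rw [mulVec_entries]
  fin_cases j <;> norm_num [Binv, Matrix.cons_val_two] <;> ring

lemma J_vec (a b c : ℤ) : Jmat.mulVec ![a,b,c] = ![c,b,a] := by
  funext j
  rw [mulVec_entries]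
  fin_cases j <;> norm_num [Jmat, Matrix.cons_val_two]

lemma step_ineq {x0 x1 x2 : ℤ} (hq : x0^2 - 2*x1^2 + x2^2 = 2)
    (h4 : 4 ≤ x1^2) (hse : 0 ≤ x0*x1) (hcmp : x2^2 ≤ x0^2) :
    (-(2*x0)+3*x1)^2 < x1^2 := by
  have hup : x0^2 ≤ 2 + 2*x1^2 := by nlinarith [sq_nonneg x2]
  have hlo : x1^2 + 1 ≤ x0^2 := by nlinarith
  have hx1 : 2 ≤ x1 ∨ x1 ≤ -2 := by
    rcases le_or_gt 2 x1 with h | h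
    · exact Or.inl h
    · rcases le_or_gt x1 (-2) with h' | h'
      · exact Or.inr h'
      · exfalso
        have : x1 = -1 ∨ x1 = 0 ∨ x1 = 1 := by omega
        rcases this with h0|h0|h0 <;> rw [h0] at h4 <;> norm_num at h4
  rcases hx1 with hx1 | hx1
  · have hx0 : 1 ≤ x0 := by
      rcases le_or_gt 1 x0 with h | h
      · exact h
      · exfalso
        have h0 : x0 = 0 ∨ x0 ≤ -1 := by omega
        rcases h0 with h0 | h0
        · rw [h0] at hlo; nlinarith
        · nlinarith [mul_pos (show (0:ℤ) < -x0 by omega) (show (0:ℤ) < x1 by omega)]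
    have hgt : x1 < x0 := by
      by_contra hc
      push_neg at hc
      nlinarith [mul_nonneg (sub_nonneg.mpr hc) (show (0:ℤ) ≤ x1 + x0 by omega)]
    have hlt : x0 < 2*x1 := by
      by_contra hc
      push_neg at hc
      nlinarith [mul_nonneg (sub_nonneg.mpr hc) (show (0:ℤ) ≤ x0 + 2*x1 by omega)]
    nlinarith [mul_pos (show (0:ℤ) < x1 - (-(2*x0)+3*x1) by omega)
      (show (0:ℤ) < x1 + (-(2*x0)+3*x1) by omega)]
  · have hx0 : x0 ≤ -1 := by
      rcases le_or_gt x0 (-1) with h | h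
      · exact h
      · exfalso
        have h0 : x0 = 0 ∨ 1 ≤ x0 := by omega
        rcases h0 with h0 | h0
        · rw [h0] at hlo; nlinarith
        · nlinarith [mul_pos (show (0:ℤ) < x0 by omega) (show (0:ℤ) < -x1 by omega)]
    have hgt : x0 < x1 := by
      by_contra hc
      push_neg at hc
      nlinarith [mul_nonneg (sub_nonneg.mpr hc) (show (0:ℤ) ≤ -x1 - x0 by omega)]
    have hlt : 2*x1 < x0 := by
      by_contra hc
      push_neg at hc
      nlinarith [mul_nonneg (sub_nonneg.mpr hc) (show (0:ℤ) ≤ -x0 - 2*x1 by omega)]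
    nlinarith [mul_pos (show (0:ℤ) < (-(2*x0)+3*x1) - x1 by omega)
      (show (0:ℤ) < -x1 - (-(2*x0)+3*x1) by omega)]

lemma good_all : ∀ n : ℕ, ∀ x : Fin 3 → ℤ, (x 1).natAbs = n →
    x 0^2 - 2*(x 1)^2 + (x 2)^2 = 2 → Good x := by
  intro n
  induction n using Nat.strong_induction_on with
  | _ n IH =>
    intro x hn hq
    rcases Nat.lt_or_ge n 2 with hsmall | hbig
    · -- base cases : |x 1| ≤ 1
      have hx1 : x 1 = 0 ∨ x 1 = 1 ∨ x 1 = -1 := by omega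
      have hxb : (x 0)^2 + (x 2)^2 ≤ 4 := by
        rcases hx1 with h|h|h <;> rw [h] at hq <;> nlinarith
      have hb0 : -2 ≤ x 0 ∧ x 0 ≤ 2 := by
        constructor <;> nlinarith [sq_nonneg (x 2), sq_nonneg (x 0 - 2), sq_nonneg (x 0 + 2)]
      have hb2 : -2 ≤ x 2 ∧ x 2 ≤ 2 := by
        constructor <;> nlinarith [sq_nonneg (x 0), sq_nonneg (x 2 - 2), sq_nonneg (x 2 + 2)]
      have heta := vec3_eta x
      apply good_base
      have h0cases : x 0 = -2 ∨ x 0 = -1 ∨ x 0 = 0 ∨ x 0 = 1 ∨ x 0 = 2 := by omega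
      have h2cases : x 2 = -2 ∨ x 2 = -1 ∨ x 2 = 0 ∨ x 2 = 1 ∨ x 2 = 2 := by omega
      rcases hx1 with h1|h1|h1 <;> rcases h0cases with h0|h0|h0|h0|h0 <;>
        rcases h2cases with h2|h2|h2|h2|h2 <;>
        rw [h0, h1, h2] at hq heta <;> norm_num at hq <;> tauto
    · -- descent step
      have main : ∀ z : Fin 3 → ℤ, (z 1).natAbs = n →
          z 0^2 - 2*(z 1)^2 + (z 2)^2 = 2 → (z 2)^2 ≤ (z 0)^2 → Good z := by
        intro z hzn hzq hzc
        have h4 : 4 ≤ (z 1)^2 := by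
          have h2z : 2 ≤ z 1 ∨ z 1 ≤ -2 := by omega
          rcases h2z with h|h <;> nlinarith
        rcases le_or_gt 0 (z 0 * z 1) with hse | hse
        · -- z = B y with y = B⁻¹ z
          have hstep := step_ineq hzq h4 hse hzc
          have hqy : (![3*(z 0)-4*(z 1), -(2*(z 0))+3*(z 1), z 2] : Fin 3 → ℤ) 0 ^2 -
              2*((![3*(z 0)-4*(z 1), -(2*(z 0))+3*(z 1), z 2] : Fin 3 → ℤ) 1)^2 +
              ((![3*(z 0)-4*(z 1), -(2*(z 0))+3*(z 1), z 2] : Fin 3 → ℤ) 2)^2 = 2 := by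
            show (3*(z 0)-4*(z 1))^2 - 2*(-(2*(z 0))+3*(z 1))^2 + (z 2)^2 = 2
            linear_combination hzq
          have hlt : ((![3*(z 0)-4*(z 1), -(2*(z 0))+3*(z 1), z 2] : Fin 3 → ℤ) 1).natAbs < n := by
            rw [← hzn]
            exact natAbs_lt_of_sq hstep
          have hgy := IH _ hlt _ rfl hqy
          have hz : z = Bmat.mulVec ![3*(z 0)-4*(z 1), -(2*(z 0))+3*(z 1), z 2] :=
            (vec3_eta z).trans (B_vec (z 0) (z 1) (z 2)).symm
          rw [hz]
          have hgm := good_mulVec hgy BGL_mem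
          rwa [show ((BGL : GL (Fin 3) ℤ) : Matrix (Fin 3) (Fin 3) ℤ) = Bmat from rfl] at hgm
        · -- z = B⁻¹ y with y = B z
          have hse' : 0 ≤ (-(z 0))*(z 1) := by nlinarith
          have hzc' : (z 2)^2 ≤ (-(z 0))^2 := by nlinarith
          have hzq' : (-(z 0))^2 - 2*(z 1)^2 + (z 2)^2 = 2 := by linear_combination hzq
          have hstep := step_ineq hzq' h4 hse' hzc'
          have hstep' : (2*(z 0)+3*(z 1))^2 < (z 1)^2 := by
            have he : (-(2*(-(z 0)))+3*(z 1)) = 2*(z 0)+3*(z 1) := by ring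
            rwa [he] at hstep
          have hqy : (![3*(z 0)+4*(z 1), 2*(z 0)+3*(z 1), z 2] : Fin 3 → ℤ) 0 ^2 -
              2*((![3*(z 0)+4*(z 1), 2*(z 0)+3*(z 1), z 2] : Fin 3 → ℤ) 1)^2 +
              ((![3*(z 0)+4*(z 1), 2*(z 0)+3*(z 1), z 2] : Fin 3 → ℤ) 2)^2 = 2 := by
            show (3*(z 0)+4*(z 1))^2 - 2*(2*(z 0)+3*(z 1))^2 + (z 2)^2 = 2
            linear_combination hzq
          have hlt : ((![3*(z 0)+4*(z 1), 2*(z 0)+3*(z 1), z 2] : Fin 3 → ℤ) 1).natAbs < n := by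
            rw [← hzn]
            exact natAbs_lt_of_sq hstep'
          have hgy := IH _ hlt _ rfl hqy
          have hz : z = Binv.mulVec ![3*(z 0)+4*(z 1), 2*(z 0)+3*(z 1), z 2] :=
            (vec3_eta z).trans (Binv_vec (z 0) (z 1) (z 2)).symm
          rw [hz]
          have hgm := good_mulVec hgy (inv_mem BGL_mem)
          rwa [show ((BGL⁻¹ : GL (Fin 3) ℤ) : Matrix (Fin 3) (Fin 3) ℤ) = Binv from rfl] at hgm
      rcases le_or_gt ((x 2)^2) ((x 0)^2) with hc | hc
      · exact main x hn hq hc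
      · have hgy := main ![x 2, x 1, x 0] (show ((![x 2, x 1, x 0] : Fin 3 → ℤ) 1).natAbs = n from hn)
          (by show (x 2)^2 - 2*(x 1)^2 + (x 0)^2 = 2; linear_combination hq) (le_of_lt hc)
        have hx : x = Jmat.mulVec ![x 2, x 1, x 0] := by
          rw [J_vec]
          exact vec3_eta x
        rw [hx]
        have hgm := good_mulVec hgy JGL_mem
        rwa [show ((JGL : GL (Fin 3) ℤ) : Matrix (Fin 3) (Fin 3) ℤ) = Jmat from rfl] at hgm

end B3aux

open B3aux in
/-- Every length-3 Büchi sequence of integers is `M δ` for some `M ∈ H` and a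
unique `δ ∈ Δ₂`; moreover `M` is unique if `δ ∉ {(1,0,1), (-1,0,-1)}`, and there
are exactly two such matrices, `M` and `M * J`, otherwise. -/
theorem buchi3_representation (x : Fin 3 → ℤ)
    (hx : x 0 ^ 2 - 2 * x 1 ^ 2 + x 2 ^ 2 = 2) :
    (∃ M ∈ H, ∃ δ ∈ Delta2, x = (M : Matrix (Fin 3) (Fin 3) ℤ).mulVec δ) ∧
    (∀ M ∈ H, ∀ δ ∈ Delta2, x = (M : Matrix (Fin 3) (Fin 3) ℤ).mulVec δ →
      ∀ M' ∈ H, ∀ δ' ∈ Delta2, x = (M' : Matrix (Fin 3) (Fin 3) ℤ).mulVec δ' →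
        δ' = δ ∧
        (δ ∉ ({![1, 0, 1], ![-1, 0, -1]} : Set (Fin 3 → ℤ)) → M' = M) ∧
        (δ ∈ ({![1, 0, 1], ![-1, 0, -1]} : Set (Fin 3 → ℤ)) →
          M' = M ∨ M' = M * JGL)) := by
  constructor
  · exact good_all (x 1).natAbs x rfl hx
  · intro M hM δ hδ hxM M' hM' δ' hδ' hxM'
    have hNH : M⁻¹ * M' ∈ H := mul_mem (inv_mem hM) hM'
    have key : ((M⁻¹ * M' : GL (Fin 3) ℤ) : Matrix (Fin 3) (Fin 3) ℤ).mulVec δ' = δ := by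
      rw [Units.val_mul, ← Matrix.mulVec_mulVec, ← hxM', hxM, Matrix.mulVec_mulVec,
        M.inv_mul, Matrix.one_mulVec]
    simp only [Delta2, Set.mem_insert_iff, Set.mem_singleton_iff] at hδ hδ'
    have hdd : δ' = δ := by
      rcases hδ' with h' | h' | h' | h' | h'
      · subst h'
        have hmem : redT δ ∈ S1 := by
          rw [← key]
          exact (H_orbit_invariant S1_closed hNH _).mp (by decide)
        rcases hδ with h | h | h | h | h <;> subst h <;>
          first | rfl | exact absurd hmem (by decide)
      · subst h'
        have hmem : redT δ ∈ S2 := by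
          rw [← key]
          exact (H_orbit_invariant S2_closed hNH _).mp (by decide)
        rcases hδ with h | h | h | h | h <;> subst h <;>
          first | rfl | exact absurd hmem (by decide)
      · subst h'
        have hmem : redT δ ∈ S3 := by
          rw [← key]
          exact (H_orbit_invariant S3_closed hNH _).mp (by decide)
        rcases hδ with h | h | h | h | h <;> subst h <;>
          first | rfl | exact absurd hmem (by decide)
      · subst h'
        have hmem : redT δ ∈ S4 := by
          rw [← key]
          exact (H_orbit_invariant S4_closed hNH _).mp (by decide)
        rcases hδ with h | h | h | h | h <;> subst h <;>
          first | rfl | exact absurd hmem (by decide)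
      · subst h'
        have hmem : redT δ ∈ S5 := by
          rw [← key]
          exact (H_orbit_invariant S5_closed hNH _).mp (by decide)
        rcases hδ with h | h | h | h | h <;> subst h <;>
          first | rfl | exact absurd hmem (by decide)
    subst hdd
    refine ⟨rfl, ?_⟩
    rcases hδ with h | h | h | h | h <;> subst h
    · have hN1 := stab_d1 hNH key
      have hMM : M' = M := (inv_mul_eq_one.mp hN1).symm
      exact ⟨fun _ => hMM, fun _ => Or.inl hMM⟩
    · have hN1 := stab_d2 hNH key
      have hMM : M' = M := (inv_mul_eq_one.mp hN1).symm
      exact ⟨fun _ => hMM, fun _ => Or.inl hMM⟩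
    · rcases stab_p1 hNH key with h1 | h1
      · have hMM : M' = M := (inv_mul_eq_one.mp h1).symm
        exact ⟨fun _ => hMM, fun _ => Or.inl hMM⟩
      · have hMM : M' = M * JGL := by
          have h2 := congrArg (fun u => M * u) h1
          simpa [mul_inv_cancel_left] using h2
        refine ⟨fun hnot => absurd (Set.mem_insert _ _) hnot, fun _ => Or.inr hMM⟩
    · have hN1 := stab_m hNH key
      have hMM : M' = M := (inv_mul_eq_one.mp hN1).symm
      exact ⟨fun _ => hMM, fun _ => Or.inl hMM⟩
    · rcases stab_p2 hNH key with h1 | h1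
      · have hMM : M' = M := (inv_mul_eq_one.mp h1).symm
        exact ⟨fun _ => hMM, fun _ => Or.inl hMM⟩
      · have hMM : M' = M * JGL := by
          have h2 := congrArg (fun u => M * u) h1
          simpa [mul_inv_cancel_left] using h2
        refine ⟨fun hnot => absurd (Set.mem_insert_of_mem _ rfl) hnot, fun _ => Or.inr hMM⟩
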